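/- For every real m > 0, with k = −1/√3, the following limit holds: lim_{ρ→ρ₊(m)⁺} β_m(ρ)²·(4/3 + (θ_m(ρ) + k)²·β_m(ρ)/(1 − β_m(ρ))) = 1/(9·ρ₊(m)²). (In the paper's notation, lim e^{2λ}/α² = 1/(9ρ₊²) at the regular center, where α = 1/β and e^{2λ} = 1 + k² + (θ + k)²/(α − 1); this identifies the parameter X > 0 of a general interior solution with 1/(9ρ₊²) and yields the classification of all cone interior solutions as Lorentzian Hawking–Page solutions.) -/

import Mathlib

noncomputable def Vhp (m ρ : ℝ) : ℝ := ρ ^ 2 + 1 - 2 * m / ρ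

noncomputable def Vhp' (m ρ : ℝ) : ℝ := 2 * ρ + 2 * m / ρ ^ 2

/-- `β_m`, the renormalized self-similar quantity of the Lorentzian Hawking–Page solution. -/
noncomputable def betaHP (m ρ : ℝ) : ℝ :=
  (1 / 3) * (3 / 2 - Real.sqrt (Vhp m ρ) / ρ - Vhp' m ρ / (4 * Real.sqrt (Vhp m ρ)))

/-- `θ_m`, for the + sign of the scalar field (`k = −1/√3`). -/
noncomputable def thetaHP (m ρ : ℝ) : ℝ :=
  Real.sqrt 3 * ρ * (Vhp' m ρ - 2 * Real.sqrt (Vhp m ρ)) /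
    (4 * Vhp m ρ + ρ * Vhp' m ρ - 6 * ρ * Real.sqrt (Vhp m ρ))

/-- For every `m > 0`, with `k = −1/√3`,
`lim_{ρ→ρ₊(m)⁺} β_m(ρ)²·(4/3 + (θ_m(ρ) + k)²·β_m(ρ)/(1 − β_m(ρ))) = 1/(9·ρ₊(m)²)`;
in the paper's notation, `lim e^{2λ}/α² = 1/(9ρ₊²)` at the regular center. -/
lemma algHP (r s t p : ℝ) (hr : 0 < r) (hs : 0 < s) (ht2 : t ^ 2 = 3) (ht : 0 < t)
    (hkey : 3 * r ^ 2 - s ^ 2 - r * p = -1)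
    (hN : 6 * r * s - 4 * s ^ 2 - r * p < 0) :
    (1 / 3 * (3 / 2 - s / r - p / (4 * s))) ^ 2 *
      (4 / 3 + (t * r * (p - 2 * s) / (4 * s ^ 2 + r * p - 6 * r * s) + -1 / t) ^ 2 *
        (1 / 3 * (3 / 2 - s / r - p / (4 * s))) / (1 - 1 / 3 * (3 / 2 - s / r - p / (4 * s)))) =
    (r * p + 4 * s ^ 2 - 6 * r * s) / (9 * r ^ 2 * (r * p + 4 * s ^ 2 + 6 * r * s)) := by
  have hrne : r ≠ 0 := hr.ne'
  have hsne : s ≠ 0 := hs.ne'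
  have htne : t ≠ 0 := ht.ne'
  have hM : 0 < r * p + 4 * s ^ 2 + 6 * r * s := by nlinarith [sq_nonneg (r + s)]
  have hMne : r * p + 4 * s ^ 2 + 6 * r * s ≠ 0 := hM.ne'
  have hD : 4 * s ^ 2 + r * p - 6 * r * s ≠ 0 := by intro h; linarith
  have hNne : 6 * r * s - 4 * s ^ 2 - r * p ≠ 0 := hN.ne
  have hinv : (-1 : ℝ) / t = -t / 3 := by
    rw [div_eq_div_iff htne (by norm_num : (3:ℝ) ≠ 0)]
    linear_combination ht2
  have eΘ : (t * r * (p - 2 * s) / (4 * s ^ 2 + r * p - 6 * r * s) + -1 / t) ^ 2 =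
      4 * (r * p - 2 * s ^ 2) ^ 2 / (3 * (4 * s ^ 2 + r * p - 6 * r * s) ^ 2) := by
    rw [hinv]
    have h1 : (t * r * (p - 2 * s) / (4 * s ^ 2 + r * p - 6 * r * s) + -t / 3) ^ 2 =
        t ^ 2 * (r * (p - 2 * s) / (4 * s ^ 2 + r * p - 6 * r * s) + -1 / 3) ^ 2 := by
      ring
    rw [h1, ht2, div_add' _ _ _ hD, div_pow, mul_div_assoc',
      div_eq_div_iff (pow_ne_zero 2 hD) (mul_ne_zero three_ne_zero (pow_ne_zero 2 hD))]
    ring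
  have eβ : 1 / 3 * (3 / 2 - s / r - p / (4 * s)) =
      (6 * r * s - 4 * s ^ 2 - r * p) / (12 * r * s) := by
    field_simp
    ring
  have h5 : (r * p - 2 * s ^ 2) ^ 2 =
      -12 * s ^ 2 - (6 * r * s - 4 * s ^ 2 - r * p) * (r * p + 4 * s ^ 2 + 6 * r * s) := by
    linear_combination (12 * s ^ 2) * hkey
  have h1b : 1 - (6 * r * s - 4 * s ^ 2 - r * p) / (12 * r * s) =
      (r * p + 4 * s ^ 2 + 6 * r * s) / (12 * r * s) := by
    field_simp
    ring
  rw [eβ, eΘ, h5, h1b]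
  have hD' : 4 * s ^ 2 + r * p - 6 * r * s = -(6 * r * s - 4 * s ^ 2 - r * p) := by ring
  have hR : r * p + 4 * s ^ 2 - 6 * r * s = -(6 * r * s - 4 * s ^ 2 - r * p) := by ring
  rw [hD', hR]
  generalize 6 * r * s - 4 * s ^ 2 - r * p = N at *
  generalize r * p + 4 * s ^ 2 + 6 * r * s = M at *
  field_simp
  ring


theorem e2lambda_over_alpha_sq_limit (m : ℝ) (hm : 0 < m) (ρp : ℝ)
    (hρp : 0 < ρp ∧ ρp ^ 3 + ρp - 2 * m = 0) :
    Filter.Tendsto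
      (fun ρ : ℝ => (betaHP m ρ) ^ 2 *
        (4 / 3 + (thetaHP m ρ + (-1 / Real.sqrt 3)) ^ 2 * betaHP m ρ / (1 - betaHP m ρ)))
      (nhdsWithin ρp (Set.Ioi ρp)) (nhds (1 / (9 * ρp ^ 2))) := by
  obtain ⟨hpos, heq⟩ := hρp
  have hrne : ρp ≠ 0 := hpos.ne'
  have hVp : Vhp m ρp = 0 := by
    unfold Vhp
    field_simp
    linear_combination heq
  -- the simplified function g
  set g : ℝ → ℝ := fun ρ =>
    (ρ * Vhp' m ρ + 4 * Vhp m ρ - 6 * ρ * Real.sqrt (Vhp m ρ)) /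
      (9 * ρ ^ 2 * (ρ * Vhp' m ρ + 4 * Vhp m ρ + 6 * ρ * Real.sqrt (Vhp m ρ))) with hg
  have hcV : ContinuousAt (fun ρ => Vhp m ρ) ρp := by
    unfold Vhp
    exact ((continuousAt_id.pow 2).add continuousAt_const).sub
      (continuousAt_const.div continuousAt_id hrne)
  have hcV' : ContinuousAt (fun ρ => Vhp' m ρ) ρp := by
    unfold Vhp'
    exact (continuousAt_const.mul continuousAt_id).add
      (continuousAt_const.div (continuousAt_id.pow 2) (pow_ne_zero 2 hrne))
  have hcs : ContinuousAt (fun ρ => Real.sqrt (Vhp m ρ)) ρp :=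
    Real.continuous_sqrt.continuousAt.comp hcV
  have hV'pos : 0 < Vhp' m ρp := by unfold Vhp'; positivity
  have hcN : ContinuousAt (fun ρ => ρ * Vhp' m ρ + 4 * Vhp m ρ - 6 * ρ * Real.sqrt (Vhp m ρ)) ρp :=
    ((continuousAt_id.mul hcV').add (continuousAt_const.mul hcV)).sub
      ((continuousAt_const.mul continuousAt_id).mul hcs)
  have hcM : ContinuousAt (fun ρ => ρ * Vhp' m ρ + 4 * Vhp m ρ + 6 * ρ * Real.sqrt (Vhp m ρ)) ρp :=
    ((continuousAt_id.mul hcV').add (continuousAt_const.mul hcV)).add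
      ((continuousAt_const.mul continuousAt_id).mul hcs)
  have hMval : ρp * Vhp' m ρp + 4 * Vhp m ρp + 6 * ρp * Real.sqrt (Vhp m ρp) = ρp * Vhp' m ρp := by
    rw [hVp, Real.sqrt_zero]; ring
  have hdenne : 9 * ρp ^ 2 * (ρp * Vhp' m ρp + 4 * Vhp m ρp + 6 * ρp * Real.sqrt (Vhp m ρp)) ≠ 0 := by
    rw [hMval]
    positivity
  have hcg : ContinuousAt g ρp := by
    rw [hg]
    exact hcN.div ((continuousAt_const.mul (continuousAt_id.pow 2)).mul hcM) hdenne
  have hgval : g ρp = 1 / (9 * ρp ^ 2) := by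
    rw [hg]
    simp only [hVp, Real.sqrt_zero]
    have hpe : ρp * Vhp' m ρp ≠ 0 := by positivity
    field_simp
    ring
  have htg : Filter.Tendsto g (nhdsWithin ρp (Set.Ioi ρp)) (nhds (1 / (9 * ρp ^ 2))) := by
    rw [← hgval]
    exact hcg.continuousWithinAt.tendsto
  -- eventual negativity of N
  have hNval : ρp * Vhp' m ρp + 4 * Vhp m ρp - 6 * ρp * Real.sqrt (Vhp m ρp) = ρp * Vhp' m ρp := by
    rw [hVp, Real.sqrt_zero]; ring
  have hNev : ∀ᶠ ρ in nhdsWithin ρp (Set.Ioi ρp),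
      0 < ρ * Vhp' m ρ + 4 * Vhp m ρ - 6 * ρ * Real.sqrt (Vhp m ρ) := by
    have h0 : (0:ℝ) < ρp * Vhp' m ρp + 4 * Vhp m ρp - 6 * ρp * Real.sqrt (Vhp m ρp) := by
      rw [hNval]; positivity
    exact (hcN.eventually (eventually_gt_nhds h0)).filter_mono nhdsWithin_le_nhds
  have heqv : ∀ᶠ ρ in nhdsWithin ρp (Set.Ioi ρp),
      (betaHP m ρ) ^ 2 *
        (4 / 3 + (thetaHP m ρ + (-1 / Real.sqrt 3)) ^ 2 * betaHP m ρ / (1 - betaHP m ρ)) = g ρ := by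
    filter_upwards [hNev, self_mem_nhdsWithin] with ρ hNρ (hmem : ρp < ρ)
    have hρ0 : 0 < ρ := hpos.trans hmem
    have hVpos : 0 < Vhp m ρ := by
      have h3 : ρp ^ 3 < ρ ^ 3 := pow_lt_pow_left₀ hmem hpos.le (by norm_num)
      have h1 : 0 < ρ ^ 3 + ρ - 2 * m := by linarith
      have h2 : Vhp m ρ = (ρ ^ 3 + ρ - 2 * m) / ρ := by
        unfold Vhp; field_simp
      rw [h2]; positivity
    have hs : 0 < Real.sqrt (Vhp m ρ) := Real.sqrt_pos.mpr hVpos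
    have hs2 : Real.sqrt (Vhp m ρ) ^ 2 = Vhp m ρ := Real.sq_sqrt hVpos.le
    have ht2 : Real.sqrt 3 ^ 2 = 3 := Real.sq_sqrt (by norm_num)
    have ht : (0:ℝ) < Real.sqrt 3 := Real.sqrt_pos.mpr (by norm_num)
    have hkey : 3 * ρ ^ 2 - Real.sqrt (Vhp m ρ) ^ 2 - ρ * Vhp' m ρ = -1 := by
      rw [hs2]; unfold Vhp Vhp'; field_simp; ring
    have hN' : 6 * ρ * Real.sqrt (Vhp m ρ) - 4 * Real.sqrt (Vhp m ρ) ^ 2 - ρ * Vhp' m ρ < 0 := by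
      rw [hs2]; linarith
    have := algHP ρ (Real.sqrt (Vhp m ρ)) (Real.sqrt 3) (Vhp' m ρ) hρ0 hs ht2 ht hkey hN'
    rw [hs2] at this
    calc (betaHP m ρ) ^ 2 *
        (4 / 3 + (thetaHP m ρ + (-1 / Real.sqrt 3)) ^ 2 * betaHP m ρ / (1 - betaHP m ρ))
        = (1 / 3 * (3 / 2 - Real.sqrt (Vhp m ρ) / ρ - Vhp' m ρ / (4 * Real.sqrt (Vhp m ρ)))) ^ 2 *
      (4 / 3 + (Real.sqrt 3 * ρ * (Vhp' m ρ - 2 * Real.sqrt (Vhp m ρ)) /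
          (4 * Vhp m ρ + ρ * Vhp' m ρ - 6 * ρ * Real.sqrt (Vhp m ρ)) + -1 / Real.sqrt 3) ^ 2 *
        (1 / 3 * (3 / 2 - Real.sqrt (Vhp m ρ) / ρ - Vhp' m ρ / (4 * Real.sqrt (Vhp m ρ)))) /
        (1 - 1 / 3 * (3 / 2 - Real.sqrt (Vhp m ρ) / ρ - Vhp' m ρ / (4 * Real.sqrt (Vhp m ρ))))) := by
          simp only [betaHP, thetaHP]
      _ = (ρ * Vhp' m ρ + 4 * Vhp m ρ - 6 * ρ * Real.sqrt (Vhp m ρ)) /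
          (9 * ρ ^ 2 * (ρ * Vhp' m ρ + 4 * Vhp m ρ + 6 * ρ * Real.sqrt (Vhp m ρ))) := by
          rw [← this]
      _ = g ρ := rfl
  exact htg.congr' (heqv.mono fun x hx => hx.symm)
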